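/- arXiv:2004.10103 — 9 statements merged into one kernel-verified Lean document; each statement's English description precedes it below -/
import Mathlib

section
/- Let C be a proper closed convex cone in a real Banach space E, and suppose x₁, x₂ ∈ E with r₁, r₂ > 0 satisfy B(x₁, r₁) ⊆ C and B(x₂, r₂) ⊆ C. Then the Hilbert projective distance satisfies d_C(x₁, x₂) ≤ log(1 + ‖x₁ − x₂‖/r₁) + log(1 + ‖x₁ − x₂‖/r₂) ≤ (1/r₁ + 1/r₂)·‖x₁ − x₂‖. -/
open Real Metric Set

structure IsBirkhoffCone {E : Type*} [NormedAddCommGroup E] [NormedSpace ℝ E]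
    (C : Set E) : Prop where
  smul_mem : ∀ t : ℝ, 0 < t → ∀ x ∈ C, t • x ∈ C
  isClosed : IsClosed C
  convex : Convex ℝ C
  proper : C ∩ (-C) = {0}

noncomputable def hilbertDelta {E : Type*} [NormedAddCommGroup E] [NormedSpace ℝ E]
    (C : Set E) (x y : E) : ℝ :=
  sInf {t : ℝ | 0 < t ∧ t • x - y ∈ C}

lemma hilbertDelta_bounds {E : Type*} [NormedAddCommGroup E] [NormedSpace ℝ E]
    {C : Set E} (hC : IsBirkhoffCone C) (x y : E) {r : ℝ} (hr : 0 < r)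
    (h : Metric.ball x r ⊆ C) :
    0 ≤ hilbertDelta C x y ∧ hilbertDelta C x y ≤ 1 + ‖x - y‖ / r := by
  have h0 : (0 : E) ∈ C := by
    have : (0 : E) ∈ C ∩ (-C) := by rw [hC.proper]; exact rfl
    exact this.1
  have hcb : Metric.closedBall x r ⊆ C := by
    rw [← closure_ball x hr.ne']
    exact hC.isClosed.closure_subset_iff.mpr h
  set d := ‖x - y‖ with hd
  have hdpos : 0 ≤ d := norm_nonneg _
  have htpos : 0 < 1 + d / r := by positivity
  have hmem : (1 + d / r) ∈ {t : ℝ | 0 < t ∧ t • x - y ∈ C} := by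
    refine ⟨htpos, ?_⟩
    rcases eq_or_lt_of_le hdpos with hd0 | hd0
    · have hxy : x = y := by
        have : x - y = 0 := by
          rw [← norm_eq_zero]; exact hd0.symm
        exact sub_eq_zero.mp this
      have : (1 + d / r) • x - y = (d / r) • x := by
        rw [hxy]; rw [add_smul, one_smul]; abel
      rw [this]
      rcases eq_or_lt_of_le hdpos with hd0' | hd0'
      · rw [← hd0', zero_div, zero_smul]; exact h0
      · exact hC.smul_mem _ (by positivity) _ (h (mem_ball_self hr))
    · have key : (1 + d / r) • x - y = (d / r) • (x + (r / d) • (x - y)) := by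
        rw [smul_add, smul_smul, add_smul, one_smul]
        rw [div_mul_div_comm, mul_comm d r, div_self (by positivity : r * d ≠ 0), one_smul]
        abel
      rw [key]
      refine hC.smul_mem _ (by positivity) _ (hcb ?_)
      rw [Metric.mem_closedBall, dist_eq_norm]
      have : x + (r / d) • (x - y) - x = (r / d) • (x - y) := by abel
      rw [this, norm_smul, Real.norm_of_nonneg (by positivity : (0:ℝ) ≤ r / d), ← hd,
        div_mul_cancel₀ _ hd0.ne']
  constructor
  · exact Real.sInf_nonneg (fun t ht => ht.1.le)
  · exact csInf_le ⟨0, fun t ht => ht.1.le⟩ hmem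
noncomputable def hilbertDist {E : Type*} [NormedAddCommGroup E] [NormedSpace ℝ E]
    (C : Set E) (x y : E) : ℝ :=
  Real.log (hilbertDelta C x y * hilbertDelta C y x)

theorem hilbertDist_le_of_ball_subset
    {E : Type*} [NormedAddCommGroup E] [NormedSpace ℝ E]
    (C : Set E) (hC : IsBirkhoffCone C) (x₁ x₂ : E) (r₁ r₂ : ℝ)
    (hr₁ : 0 < r₁) (hr₂ : 0 < r₂)
    (h₁ : Metric.ball x₁ r₁ ⊆ C) (h₂ : Metric.ball x₂ r₂ ⊆ C) :
    hilbertDist C x₁ x₂ ≤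
        Real.log (1 + ‖x₁ - x₂‖ / r₁) + Real.log (1 + ‖x₁ - x₂‖ / r₂) ∧
      Real.log (1 + ‖x₁ - x₂‖ / r₁) + Real.log (1 + ‖x₁ - x₂‖ / r₂) ≤
        (1 / r₁ + 1 / r₂) * ‖x₁ - x₂‖ := by
  obtain ⟨h1a, h1b⟩ := hilbertDelta_bounds hC x₁ x₂ hr₁ h₁
  obtain ⟨h2a, h2b⟩ := hilbertDelta_bounds hC x₂ x₁ hr₂ h₂
  rw [norm_sub_rev] at h2b
  set d := ‖x₁ - x₂‖ with hd
  have hdpos : 0 ≤ d := norm_nonneg _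
  have ht₁ : 0 < 1 + d / r₁ := by positivity
  have ht₂ : 0 < 1 + d / r₂ := by positivity
  constructor
  · have hp : hilbertDelta C x₁ x₂ * hilbertDelta C x₂ x₁ ≤ (1 + d / r₁) * (1 + d / r₂) :=
      mul_le_mul h1b h2b h2a ht₁.le
    unfold hilbertDist
    rcases eq_or_lt_of_le (mul_nonneg h1a h2a) with h0 | h0
    · rw [← h0, Real.log_zero]
      exact add_nonneg (Real.log_nonneg (by linarith [div_nonneg hdpos hr₁.le]))
        (Real.log_nonneg (by linarith [div_nonneg hdpos hr₂.le]))
    · rw [← Real.log_mul ht₁.ne' ht₂.ne']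
      exact Real.log_le_log h0 hp
  · have l1 : Real.log (1 + d / r₁) ≤ d / r₁ := by
      have := Real.log_le_sub_one_of_pos ht₁; linarith
    have l2 : Real.log (1 + d / r₂) ≤ d / r₂ := by
      have := Real.log_le_sub_one_of_pos ht₂; linarith
    have : d / r₁ + d / r₂ = (1 / r₁ + 1 / r₂) * d := by ring
    linarith
end

section
/- Let C be a proper closed convex cone in a real Banach space E that is outer regular with linear functional ℓ of norm 1 and constant K ≥ 1 (i.e., (1/K)‖u‖ ≤ ⟨ℓ,u⟩ ≤ ‖u‖ for all u ∈ C), and inner regular with parameter ρ ∈ (0,1]. If x, y lie in the slice C_{ℓ=1}(ρ) = {u ∈ C : ⟨ℓ,u⟩ = 1 and B(u, ρ‖u‖) ⊆ C}, then d_C(x, y) ≤ 2·log(1 + ‖x−y‖/ρ) ≤ (2/ρ)·‖x − y‖. -/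
open Real Metric Set

lemma aux_delta_bounds {E : Type*} [NormedAddCommGroup E] [NormedSpace ℝ E]
    (C : Set E) (hC : IsBirkhoffCone C)
    (ℓ : E →L[ℝ] ℝ) (ρ : ℝ) (hℓ : ‖ℓ‖ = 1)
    (houter : ∀ u ∈ C, 0 ≤ ℓ u) (hρ0 : 0 < ρ)
    (x y : E) (hxC : x ∈ C) (hxl : ℓ x = 1) (hxb : Metric.ball x (ρ * ‖x‖) ⊆ C)
    (hyC : y ∈ C) (hyl : ℓ y = 1) :
    1 ≤ hilbertDelta C x y ∧ hilbertDelta C x y ≤ 1 + ‖x - y‖ / ρ := by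
  have h0C : (0:E) ∈ C := by
    have : (0:E) ∈ C ∩ (-C) := by rw [hC.proper]; exact rfl
    exact this.1
  have hxn : 1 ≤ ‖x‖ := by
    have := ℓ.le_opNorm x
    rw [hℓ, one_mul, hxl, norm_one] at this
    exact this
  set a := ‖x - y‖ / ρ with ha_def
  have ha0 : 0 ≤ a := div_nonneg (norm_nonneg _) hρ0.le
  -- closed ball subset
  have hr : 0 < ρ * ‖x‖ := mul_pos hρ0 (lt_of_lt_of_le one_pos hxn)
  have hcb : Metric.closedBall x (ρ * ‖x‖) ⊆ C := by
    rw [← closure_ball x (ne_of_gt hr)]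
    exact (closure_minimal hxb hC.isClosed)
  -- membership of 1 + a
  have hmem : (1 + a) ∈ {t : ℝ | 0 < t ∧ t • x - y ∈ C} := by
    constructor
    · linarith
    · rcases eq_or_lt_of_le ha0 with h | h
      · have hxy : ‖x - y‖ = 0 := by
          have : ‖x - y‖ = a * ρ := by rw [ha_def, div_mul_cancel₀ _ hρ0.ne']
          rw [this, ← h, zero_mul]
        rw [norm_eq_zero, sub_eq_zero] at hxy
        simp [hxy, ← h]
        exact h0C
      · have hz : x + a⁻¹ • (x - y) ∈ C := by
          apply hcb
          rw [Metric.mem_closedBall, dist_eq_norm]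
          have : ‖x + a⁻¹ • (x - y) - x‖ = a⁻¹ * ‖x - y‖ := by
            rw [add_sub_cancel_left, norm_smul, Real.norm_eq_abs, abs_of_pos (inv_pos.mpr h)]
          rw [this]
          have hxyv : ‖x - y‖ = a * ρ := by rw [ha_def, div_mul_cancel₀ _ hρ0.ne']
          rw [hxyv]
          rw [inv_mul_cancel_left₀ (ne_of_gt h)]
          calc ρ = ρ * 1 := (mul_one ρ).symm
          _ ≤ ρ * ‖x‖ := by nlinarith
        have := hC.smul_mem a h _ hz
        have heq : a • (x + a⁻¹ • (x - y)) = (1 + a) • x - y := by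
          rw [smul_add, smul_smul, mul_inv_cancel₀ (ne_of_gt h), one_smul]
          module
        rwa [heq] at this
  constructor
  · apply le_csInf ⟨_, hmem⟩
    rintro t ⟨ht0, htC⟩
    have := houter _ htC
    rw [map_sub, map_smul, hxl, hyl, smul_eq_mul, mul_one] at this
    linarith
  · exact csInf_le ⟨0, fun t ht => ht.1.le⟩ hmem

/-- Corollary A.5 / `corol dC bound`: distance of slice points in `C_{ℓ=1}(ρ)`. -/
theorem hilbertDist_slice_bound
    {E : Type*} [NormedAddCommGroup E] [NormedSpace ℝ E]
    (C : Set E) (hC : IsBirkhoffCone C)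
    (ℓ : E →L[ℝ] ℝ) (K ρ : ℝ) (hℓ : ‖ℓ‖ = 1) (hK : 1 ≤ K)
    (houter : ∀ u ∈ C, ‖u‖ / K ≤ ℓ u) (hρ0 : 0 < ρ) (hρ1 : ρ ≤ 1)
    (x y : E)
    (hx : x ∈ C ∧ ℓ x = 1 ∧ Metric.ball x (ρ * ‖x‖) ⊆ C)
    (hy : y ∈ C ∧ ℓ y = 1 ∧ Metric.ball y (ρ * ‖y‖) ⊆ C) :
    hilbertDist C x y ≤ 2 * Real.log (1 + ‖x - y‖ / ρ) ∧
      2 * Real.log (1 + ‖x - y‖ / ρ) ≤ (2 / ρ) * ‖x - y‖ := by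
  obtain ⟨hxC, hxl, hxb⟩ := hx
  obtain ⟨hyC, hyl, hyb⟩ := hy
  have houter' : ∀ u ∈ C, 0 ≤ ℓ u := fun u hu =>
    le_trans (div_nonneg (norm_nonneg u) (by linarith)) (houter u hu)
  have hX := aux_delta_bounds C hC ℓ ρ hℓ houter' hρ0 x y hxC hxl hxb hyC hyl
  have hY := aux_delta_bounds C hC ℓ ρ hℓ houter' hρ0 y x hyC hyl hyb hxC hxl
  rw [norm_sub_rev y x] at hY
  set a := ‖x - y‖ / ρ with ha_def
  have ha0 : 0 ≤ a := div_nonneg (norm_nonneg _) hρ0.le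
  constructor
  · have hprod : hilbertDelta C x y * hilbertDelta C y x ≤ (1 + a) * (1 + a) :=
      mul_le_mul hX.2 hY.2 (by linarith) (by linarith)
    have hpos : 0 < hilbertDelta C x y * hilbertDelta C y x := by nlinarith [hX.1, hY.1]
    calc hilbertDist C x y ≤ Real.log ((1 + a) * (1 + a)) :=
          Real.log_le_log hpos hprod
      _ = 2 * Real.log (1 + a) := by
          rw [Real.log_mul (by linarith) (by linarith)]; ring
  · have := Real.log_le_sub_one_of_pos (show (0:ℝ) < 1 + a by linarith)
    have h2 : (2 / ρ) * ‖x - y‖ = 2 * a := by rw [ha_def]; ring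
    rw [h2]
    linarith
end

section
/- Let C be a regular Birkhoff cone in E with outer-regularity data (ℓ, K) and inner-regularity parameter ρ > 0. Let L ∈ L(E) be a bounded linear operator with L(C) ⊆ C. Then for every x ∈ C(ρ) \ {0}: (ρ/K)·‖L‖·‖x‖ ≤ ⟨ℓ, Lx⟩ ≤ ‖L‖·‖x‖, and moreover (ρ/K)·‖L‖ ≤ ⟨ℓ, Lx⟩/⟨ℓ, x⟩ ≤ K·‖L‖. -/
open Real Metric Set

/-- Lemma `lemma:upperlower`: upper and lower bounds for ⟨ℓ, Lx⟩ on C(ρ). -/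
theorem upper_lower_bounds_cone_operator
    {E : Type*} [NormedAddCommGroup E] [NormedSpace ℝ E]
    (C : Set E) (hC : IsBirkhoffCone C)
    (ℓ : E →L[ℝ] ℝ) (K ρ : ℝ) (hℓ : ‖ℓ‖ = 1) (hK : 1 ≤ K)
    (houter : ∀ u ∈ C, ‖u‖ / K ≤ ℓ u) (hρ0 : 0 < ρ) (hρ1 : ρ ≤ 1)
    (L : E →L[ℝ] E) (hL : ∀ x ∈ C, L x ∈ C)
    (x : E) (hx : x ∈ C) (hx0 : x ≠ 0)
    (hxρ : Metric.ball x (ρ * ‖x‖) ⊆ C) :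
    (ρ / K * ‖L‖ * ‖x‖ ≤ ℓ (L x) ∧ ℓ (L x) ≤ ‖L‖ * ‖x‖) ∧
    (ρ / K * ‖L‖ ≤ ℓ (L x) / ℓ x ∧ ℓ (L x) / ℓ x ≤ K * ‖L‖) := by
  have hxn : 0 < ‖x‖ := norm_pos_iff.mpr hx0
  have hK0 : (0:ℝ) < K := lt_of_lt_of_le one_pos hK
  have hr : 0 < ρ * ‖x‖ := mul_pos hρ0 hxn
  have hcb : Metric.closedBall x (ρ * ‖x‖) ⊆ C := by
    rw [← closure_ball x hr.ne']
    exact closure_minimal hxρ hC.isClosed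
  have hLx : L x ∈ C := hL x hx
  have hℓLx0 : 0 ≤ ℓ (L x) :=
    le_trans (div_nonneg (norm_nonneg _) hK0.le) (houter _ hLx)
  -- key estimate
  have key : ∀ y : E, ‖y‖ ≤ 1 → ρ * ‖x‖ * ‖L y‖ ≤ K * ℓ (L x) := by
    intro y hy
    set r := ρ * ‖x‖ with hrdef
    have hmem : ∀ s : ℝ, |s| ≤ 1 → x + (s * r) • y ∈ C := by
      intro s hs
      apply hcb
      rw [Metric.mem_closedBall, dist_eq_norm]
      simp only [add_sub_cancel_left, norm_smul, Real.norm_eq_abs, abs_mul,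
        abs_of_pos hr]
      calc |s| * r * ‖y‖ ≤ 1 * r * 1 := by
            apply mul_le_mul (mul_le_mul_of_nonneg_right hs hr.le) hy
              (norm_nonneg _) (by linarith)
        _ = r := by ring
    have hm1 : x + r • y ∈ C := by simpa using hmem 1 (by norm_num)
    have hm2 : x - r • y ∈ C := by
      have := hmem (-1) (by norm_num)
      rwa [show x + ((-1 : ℝ) * r) • y = x - r • y by module] at this
    have h1 : ‖L x + r • L y‖ / K ≤ ℓ (L x) + r * ℓ (L y) := by
      have := houter _ (hL _ hm1)
      simpa [map_add, map_smul, smul_eq_mul] using this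
    have h2 : ‖L x - r • L y‖ / K ≤ ℓ (L x) - r * ℓ (L y) := by
      have := houter _ (hL _ hm2)
      simpa [map_sub, map_smul, smul_eq_mul, sub_eq_add_neg] using this
    have htri : 2 * (r * ‖L y‖) ≤ ‖L x + r • L y‖ + ‖L x - r • L y‖ := by
      have heq : (L x + r • L y) - (L x - r • L y) = (2 * r) • L y := by
        module
      calc 2 * (r * ‖L y‖) = ‖(2*r) • L y‖ := by
            rw [norm_smul, Real.norm_eq_abs, abs_of_pos (by positivity)]; ring
        _ = ‖(L x + r • L y) - (L x - r • L y)‖ := by rw [heq]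
        _ ≤ ‖L x + r • L y‖ + ‖L x - r • L y‖ := norm_sub_le _ _
    have hs1 : ‖L x + r • L y‖ ≤ K * (ℓ (L x) + r * ℓ (L y)) := by
      rw [div_le_iff₀ hK0] at h1; linarith [h1]
    have hs2 : ‖L x - r • L y‖ ≤ K * (ℓ (L x) - r * ℓ (L y)) := by
      rw [div_le_iff₀ hK0] at h2; linarith [h2]
    nlinarith [htri, hs1, hs2]
  -- lower bound with ‖L‖
  have hlow : ρ / K * ‖L‖ * ‖x‖ ≤ ℓ (L x) := by
    have hop : ‖L‖ ≤ K * ℓ (L x) / (ρ * ‖x‖) := by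
      apply ContinuousLinearMap.opNorm_le_bound
      · positivity
      · intro y
        rcases eq_or_ne y 0 with rfl | hy0
        · simp
        · have hyn : 0 < ‖y‖ := norm_pos_iff.mpr hy0
          have := key (‖y‖⁻¹ • y) (by
            rw [norm_smul, Real.norm_eq_abs, abs_of_pos (by positivity),
              inv_mul_cancel₀ hyn.ne'])
          rw [map_smul, norm_smul, Real.norm_eq_abs,
            abs_of_pos (by positivity)] at this
          rw [div_mul_eq_mul_div, le_div_iff₀ hr]
          have h2 := mul_le_mul_of_nonneg_right this hyn.le
          have heq : ρ * ‖x‖ * (‖y‖⁻¹ * ‖L y‖) * ‖y‖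
              = ρ * ‖x‖ * ‖L y‖ * (‖y‖⁻¹ * ‖y‖) := by ring
          rw [heq, inv_mul_cancel₀ hyn.ne', mul_one] at h2
          linarith
    rw [le_div_iff₀ hr] at hop
    have : ρ / K * ‖L‖ * ‖x‖ = ‖L‖ * (ρ * ‖x‖) / K := by ring
    rw [this, div_le_iff₀ hK0]
    linarith [hop]
  have hup : ℓ (L x) ≤ ‖L‖ * ‖x‖ := by
    have h1 := ℓ.le_opNorm (L x)
    rw [hℓ, one_mul, Real.norm_eq_abs] at h1
    linarith [le_abs_self (ℓ (L x)), L.le_opNorm x]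
  have hℓx : ‖x‖ / K ≤ ℓ x := houter x hx
  have hℓx0 : 0 < ℓ x := lt_of_lt_of_le (by positivity) hℓx
  have hℓxle : ℓ x ≤ ‖x‖ := by
    have h1 := ℓ.le_opNorm x
    rw [hℓ, one_mul, Real.norm_eq_abs] at h1
    linarith [le_abs_self (ℓ x)]
  have hLn : (0:ℝ) ≤ ‖L‖ := norm_nonneg _
  refine ⟨⟨hlow, hup⟩, ?_, ?_⟩
  · rw [le_div_iff₀ hℓx0]
    nlinarith [hlow, hℓxle]
  · rw [div_le_iff₀ hℓx0]
    have : ‖x‖ ≤ K * ℓ x := by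
      rw [div_le_iff₀ hK0] at hℓx; linarith
    nlinarith [hup]
end

section
/- Let W ⊆ X be an open convex set in a Banach space, d₁ the norm metric on W, and d₂ another metric that is L-equivalent to d₁ (i.e., (1/L)d₁ ≤ d₂ ≤ L·d₁) for some L ≥ 1. Let δ₁, δ₂ > 0 be K-equivalent constants (K ≥ 1). Then a function φ : W → Z (Z Banach) is (α; δ₁, d₁)-Hölder if and only if it is (α; δ₂, d₂)-Hölder, and the corresponding local Hölder constants h^α_{δ₁,d₁}(φ) and h^α_{δ₂,d₂}(φ) are equivalent up to the factor ⌈LK⌉^{1−α}·L^α. -/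
open Real Metric Set

/-- `φ` is δ-locally α-Hölder with constant `c` on `W` w.r.t. the distance `d`. -/
def IsLocHolder {X Z : Type*} [NormedAddCommGroup Z]
    (W : Set X) (d : X → X → ℝ) (δ α c : ℝ) (φ : X → Z) : Prop :=
  ∀ ξ ∈ W, ∀ ξ' ∈ W, d ξ ξ' ≤ δ → ‖φ ξ - φ ξ'‖ ≤ c * d ξ ξ' ^ α

/-- Chaining along a segment in a convex set: if every pair of points of `W` at
norm-distance exactly `‖x - y‖ / N` has `‖φ a - φ b‖ ≤ B`, then
`‖φ x - φ y‖ ≤ N * B`. -/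
lemma chain_bound {X Z : Type*} [NormedAddCommGroup X] [NormedSpace ℝ X]
    [NormedAddCommGroup Z] (W : Set X) (hW : Convex ℝ W) (φ : X → Z)
    {x y : X} (hx : x ∈ W) (hy : y ∈ W) {N : ℕ} (hN : 0 < N) {B : ℝ}
    (hstep : ∀ a ∈ W, ∀ b ∈ W, ‖a - b‖ = ‖x - y‖ / N → ‖φ a - φ b‖ ≤ B) :
    ‖φ x - φ y‖ ≤ N * B := by
  have hN' : (0:ℝ) < N := by exact_mod_cast hN
  set z : ℕ → X := fun i => x + ((i : ℝ)/N) • (y - x) with hz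
  have hz0 : z 0 = x := by simp [hz]
  have hzN : z N = y := by
    simp only [hz, div_self hN'.ne']
    module
  have hmem : ∀ i ≤ N, z i ∈ W := by
    intro i hi
    have ht0 : 0 ≤ (i:ℝ)/N := by positivity
    have ht1 : (i:ℝ)/N ≤ 1 := by
      rw [div_le_one hN']; exact_mod_cast hi
    have h := hW hx hy (by linarith : (0:ℝ) ≤ 1 - (i:ℝ)/N) ht0 (by ring)
    have : z i = (1 - (i:ℝ)/N) • x + ((i:ℝ)/N) • y := by
      simp only [hz]; module
    rw [this]; exact h
  have hdist : ∀ i : ℕ, ‖z i - z (i+1)‖ = ‖x - y‖ / N := by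
    intro i
    have : z i - z (i+1) = (1/(N:ℝ)) • (x - y) := by
      simp only [hz, Nat.cast_add, Nat.cast_one]
      have hsplit : ((i:ℝ)+1)/N = (i:ℝ)/N + 1/N := by ring
      rw [hsplit]
      module
    rw [this, norm_smul]
    simp [abs_of_nonneg (by positivity : (0:ℝ) ≤ 1/(N:ℝ)), div_eq_mul_inv, mul_comm]
  have htel : φ x - φ y = ∑ i ∈ Finset.range N, (φ (z i) - φ (z (i+1))) := by
    rw [Finset.sum_range_sub' (fun i => φ (z i)), hz0, hzN]
  calc ‖φ x - φ y‖ = ‖∑ i ∈ Finset.range N, (φ (z i) - φ (z (i+1)))‖ := by rw [htel]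
    _ ≤ ∑ i ∈ Finset.range N, ‖φ (z i) - φ (z (i+1))‖ := norm_sum_le _ _
    _ ≤ ∑ _i ∈ Finset.range N, B := by
        refine Finset.sum_le_sum fun i hi => ?_
        have hi' : i < N := Finset.mem_range.mp hi
        exact hstep (z i) (hmem i hi'.le) (z (i+1)) (hmem (i+1) hi') (hdist i)
    _ = N * B := by simp [mul_comm]

/-- Lemma `holdereq`: local Hölder classes, and the corresponding Hölder constants
up to the factor ⌈LK⌉^{1-α}·L^α, are unchanged when replacing the norm metric by an
L-equivalent metric and the locality scale by a K-equivalent one. -/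
theorem locHolder_equiv_metrics
    {X Z : Type*} [NormedAddCommGroup X] [NormedSpace ℝ X] [NormedAddCommGroup Z]
    (W : Set X) (hWopen : IsOpen W) (hWconv : Convex ℝ W)
    (d₂ : X → X → ℝ) (L K : ℝ) (hL : 1 ≤ L) (hK : 1 ≤ K)
    (hequiv : ∀ ξ ∈ W, ∀ ξ' ∈ W, ‖ξ - ξ'‖ / L ≤ d₂ ξ ξ' ∧ d₂ ξ ξ' ≤ L * ‖ξ - ξ'‖)
    (δ₁ δ₂ : ℝ) (hδ₁ : 0 < δ₁) (hδ₂ : 0 < δ₂)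
    (hδe : δ₁ / K ≤ δ₂ ∧ δ₂ ≤ K * δ₁)
    (α : ℝ) (hα0 : 0 < α) (hα1 : α ≤ 1)
    (φ : X → Z) :
    ((∃ c : ℝ, 0 ≤ c ∧ IsLocHolder W (fun ξ ξ' => ‖ξ - ξ'‖) δ₁ α c φ) ↔
      (∃ c : ℝ, 0 ≤ c ∧ IsLocHolder W d₂ δ₂ α c φ)) ∧
    (∀ c : ℝ, 0 ≤ c → IsLocHolder W (fun ξ ξ' => ‖ξ - ξ'‖) δ₁ α c φ →
      IsLocHolder W d₂ δ₂ α ((⌈L * K⌉₊ : ℝ) ^ (1 - α) * L ^ α * c) φ) ∧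
    (∀ c : ℝ, 0 ≤ c → IsLocHolder W d₂ δ₂ α c φ →
      IsLocHolder W (fun ξ ξ' => ‖ξ - ξ'‖) δ₁ α ((⌈L * K⌉₊ : ℝ) ^ (1 - α) * L ^ α * c) φ) := by
  have hL0 : (0:ℝ) < L := lt_of_lt_of_le one_pos hL
  have hK0 : (0:ℝ) < K := lt_of_lt_of_le one_pos hK
  set N : ℕ := ⌈L * K⌉₊ with hNdef
  have hNpos : 0 < N := Nat.ceil_pos.mpr (by positivity)
  have hN' : (0:ℝ) < N := by exact_mod_cast hNpos
  have hNge : L * K ≤ (N:ℝ) := Nat.le_ceil _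
  have hNpow : (N:ℝ) ^ (1 - α) = (N:ℝ) / (N:ℝ) ^ α := by
    rw [Real.rpow_sub hN', Real.rpow_one]
  -- direction 1 → 2
  have fwd : ∀ c : ℝ, 0 ≤ c → IsLocHolder W (fun ξ ξ' => ‖ξ - ξ'‖) δ₁ α c φ →
      IsLocHolder W d₂ δ₂ α ((N : ℝ) ^ (1 - α) * L ^ α * c) φ := by
    intro c hc h ξ hξ ξ' hξ' hd
    obtain ⟨hlo, hhi⟩ := hequiv ξ hξ ξ' hξ'
    have hd2nn : 0 ≤ d₂ ξ ξ' := le_trans (by positivity) hlo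
    have hrle : ‖ξ - ξ'‖ ≤ L * d₂ ξ ξ' := by rw [div_le_iff₀ hL0] at hlo; linarith
    set r : ℝ := ‖ξ - ξ'‖ with hrdef
    have hr0 : 0 ≤ r := norm_nonneg _
    have hrN : r ≤ N * δ₁ := by
      calc r ≤ L * d₂ ξ ξ' := hrle
        _ ≤ L * δ₂ := by nlinarith
        _ ≤ L * (K * δ₁) := by nlinarith [hδe.2]
        _ ≤ N * δ₁ := by nlinarith
    have key : ‖φ ξ - φ ξ'‖ ≤ N * (c * (r / N) ^ α) := by
      apply chain_bound W hWconv φ hξ hξ' hNpos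
      intro a ha b hb hab
      have hab' : ‖a - b‖ ≤ δ₁ := by
        rw [hab]; rw [div_le_iff₀ hN']; linarith
      have := h a ha b hb hab'
      simp only at this
      rwa [hab] at this
    have halg : (N:ℝ) * (c * (r / N) ^ α) = (N:ℝ) ^ (1 - α) * c * r ^ α := by
      rw [Real.div_rpow hr0 hN'.le, hNpow]
      field_simp
    have hrpow : r ^ α ≤ L ^ α * d₂ ξ ξ' ^ α := by
      rw [← Real.mul_rpow hL0.le hd2nn]
      exact Real.rpow_le_rpow hr0 hrle hα0.le
    calc ‖φ ξ - φ ξ'‖ ≤ (N:ℝ) ^ (1 - α) * c * r ^ α := by rw [← halg]; exact key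
      _ ≤ (N:ℝ) ^ (1 - α) * c * (L ^ α * d₂ ξ ξ' ^ α) := by
          apply mul_le_mul_of_nonneg_left hrpow
          positivity
      _ = (N:ℝ) ^ (1 - α) * L ^ α * c * d₂ ξ ξ' ^ α := by ring
  -- direction 2 → 1
  have bwd : ∀ c : ℝ, 0 ≤ c → IsLocHolder W d₂ δ₂ α c φ →
      IsLocHolder W (fun ξ ξ' => ‖ξ - ξ'‖) δ₁ α ((N : ℝ) ^ (1 - α) * L ^ α * c) φ := by
    intro c hc h ξ hξ ξ' hξ' hd
    simp only at hd
    set r : ℝ := ‖ξ - ξ'‖ with hrdef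
    have hr0 : 0 ≤ r := norm_nonneg _
    have key : ‖φ ξ - φ ξ'‖ ≤ N * (c * (L * r / N) ^ α) := by
      apply chain_bound W hWconv φ hξ hξ' hNpos
      intro a ha b hb hab
      obtain ⟨hlo, hhi⟩ := hequiv a ha b hb
      have hd2nn : 0 ≤ d₂ a b := le_trans (by positivity) hlo
      have hle : d₂ a b ≤ L * r / N := by
        rw [hab] at hhi
        calc d₂ a b ≤ L * (r / N) := hhi
          _ = L * r / N := by ring
      have hδ : d₂ a b ≤ δ₂ := by
        have h1 : L * r / N ≤ δ₁ / K := by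
          rw [div_le_div_iff₀ hN' hK0]
          nlinarith
        linarith [hδe.1]
      have := h a ha b hb hδ
      calc ‖φ a - φ b‖ ≤ c * d₂ a b ^ α := this
        _ ≤ c * (L * r / N) ^ α := by
            apply mul_le_mul_of_nonneg_left _ hc
            exact Real.rpow_le_rpow hd2nn hle hα0.le
    have halg : (N:ℝ) * (c * (L * r / N) ^ α) = (N:ℝ) ^ (1 - α) * L ^ α * c * r ^ α := by
      rw [Real.div_rpow (by positivity) hN'.le, Real.mul_rpow hL0.le hr0, hNpow]
      field_simp
    rw [← halg]
    exact key
  refine ⟨⟨fun ⟨c, hc, h⟩ => ⟨(N : ℝ) ^ (1 - α) * L ^ α * c,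
      by positivity, fwd c hc h⟩,
    fun ⟨c, hc, h⟩ => ⟨(N : ℝ) ^ (1 - α) * L ^ α * c,
      by positivity, bwd c hc h⟩⟩, fwd, bwd⟩
end

section
/- Let U be an open convex subset of a Banach space B_U, let Z be a Banach space, and let 0 ≤ s < r ≤ 1. If φ : U × V → Z is r-Hölder (locally, at scale δ₁ ∈ (0,1], with respect to the max norm on the product), then for each u ∈ U the partial map φ_u := φ(u, ·) : V → Z is s-Hölder, and the map u ↦ φ_u is (r−s)-Hölder from U to the Banach space of bounded s-Hölder functions on V; moreover its Hölder norm is bounded by 2‖φ‖_r. -/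
open Real Metric Set

private lemma rpow_mono_exp' {t e₁ e₂ : ℝ} (ht0 : 0 ≤ t) (ht1 : t ≤ 1)
    (he₁ : 0 < e₁) (h : e₂ ≤ e₁) : t ^ e₁ ≤ t ^ e₂ := by
  rcases eq_or_lt_of_le ht0 with h0 | h0
  · rw [← h0, Real.zero_rpow he₁.ne']
    exact Real.rpow_nonneg le_rfl _
  · exact Real.rpow_le_rpow_of_exponent_ge h0 ht1 h

/-- Parameter extraction, Hölder case (Case 1 of Theorem `lemma:injection`):
if `φ` is locally r-Hölder on `U × V` (max norm, scale `δ₁ ∈ (0,1]`, with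
`0 ≤ s < r ≤ 1`), then each partial map `φ(u,·)` is s-Hölder with the same
constant, and `u ↦ φ(u,·)` is (r-s)-Hölder into the bounded s-Hölder functions
on `V`, with norm at most `2‖φ‖_r`. -/
theorem parameter_extraction_holder
    {BU BV Z : Type*} [NormedAddCommGroup BU] [NormedSpace ℝ BU]
    [NormedAddCommGroup BV] [NormedSpace ℝ BV] [NormedAddCommGroup Z]
    (U : Set BU) (V : Set BV)
    (hUopen : IsOpen U) (hUconv : Convex ℝ U)
    (hVopen : IsOpen V) (hVconv : Convex ℝ V)
    (s r δ₁ N : ℝ) (hs : 0 ≤ s) (hsr : s < r) (hr : r ≤ 1)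
    (hδ0 : 0 < δ₁) (hδ1 : δ₁ ≤ 1) (hN : 0 ≤ N)
    (φ : BU × BV → Z)
    (hbound : ∀ p ∈ U ×ˢ V, ‖φ p‖ ≤ N)
    (hhold : ∀ p ∈ U ×ˢ V, ∀ q ∈ U ×ˢ V, ‖p - q‖ ≤ δ₁ → ‖φ p - φ q‖ ≤ N * ‖p - q‖ ^ r) :
    (∀ u ∈ U, ∀ x ∈ V, ∀ x' ∈ V, ‖x - x'‖ ≤ δ₁ →
        ‖φ (u, x) - φ (u, x')‖ ≤ N * ‖x - x'‖ ^ s) ∧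
    (∀ u ∈ U, ∀ u' ∈ U, ‖u - u'‖ ≤ δ₁ →
      (∀ x ∈ V, ‖φ (u, x) - φ (u', x)‖ ≤ 2 * N * ‖u - u'‖ ^ (r - s)) ∧
      (∀ x ∈ V, ∀ x' ∈ V, ‖x - x'‖ ≤ δ₁ →
        ‖(φ (u, x) - φ (u', x)) - (φ (u, x') - φ (u', x'))‖ ≤
          2 * N * ‖u - u'‖ ^ (r - s) * ‖x - x'‖ ^ s)) := by
  have hr0 : (0:ℝ) < r := lt_of_le_of_lt hs hsr
  have n1 : ∀ (u : BU) (x x' : BV), ‖((u, x) : BU × BV) - (u, x')‖ = ‖x - x'‖ := by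
    intro u x x'
    rw [Prod.mk_sub_mk, Prod.norm_def, sub_self, norm_zero]
    exact max_eq_right (norm_nonneg _)
  have n2 : ∀ (u u' : BU) (x : BV), ‖((u, x) : BU × BV) - (u', x)‖ = ‖u - u'‖ := by
    intro u u' x
    rw [Prod.mk_sub_mk, Prod.norm_def, sub_self, norm_zero]
    exact max_eq_left (norm_nonneg _)
  -- key : Hölder with any smaller positive exponent
  have key : ∀ p ∈ U ×ˢ V, ∀ q ∈ U ×ˢ V, ∀ e : ℝ, 0 < e → e ≤ r → ‖p - q‖ ≤ δ₁ →
      ‖φ p - φ q‖ ≤ N * ‖p - q‖ ^ e := by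
    intro p hp q hq e he her hd
    calc ‖φ p - φ q‖ ≤ N * ‖p - q‖ ^ r := hhold p hp q hq hd
    _ ≤ N * ‖p - q‖ ^ e := by
        apply mul_le_mul_of_nonneg_left _ hN
        exact rpow_mono_exp' (norm_nonneg _) (hd.trans hδ1) hr0 her |>.trans
          (rpow_mono_exp' (norm_nonneg _) (hd.trans hδ1) he le_rfl)
  constructor
  · -- part 1
    intro u hu x hx x' hx' hd
    have hm : ((u, x) : BU × BV) ∈ U ×ˢ V := ⟨hu, hx⟩
    have hm' : ((u, x') : BU × BV) ∈ U ×ˢ V := ⟨hu, hx'⟩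
    have hd' : ‖((u, x) : BU × BV) - (u, x')‖ ≤ δ₁ := by rw [n1]; exact hd
    calc ‖φ (u, x) - φ (u, x')‖ ≤ N * ‖((u, x) : BU × BV) - (u, x')‖ ^ r :=
          hhold _ hm _ hm' hd'
    _ = N * ‖x - x'‖ ^ r := by rw [n1]
    _ ≤ N * ‖x - x'‖ ^ s := by
        apply mul_le_mul_of_nonneg_left _ hN
        exact rpow_mono_exp' (norm_nonneg _) (hd.trans hδ1) hr0 hsr.le
  · intro u hu u' hu' hdu
    have hfirst : ∀ x ∈ V, ‖φ (u, x) - φ (u', x)‖ ≤ 2 * N * ‖u - u'‖ ^ (r - s) := by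
      intro x hx
      have hd' : ‖((u, x) : BU × BV) - (u', x)‖ ≤ δ₁ := by rw [n2]; exact hdu
      calc ‖φ (u, x) - φ (u', x)‖ ≤ N * ‖((u, x) : BU × BV) - (u', x)‖ ^ (r - s) :=
            key _ ⟨hu, hx⟩ _ ⟨hu', hx⟩ (r - s) (sub_pos.mpr hsr) (by linarith) hd'
      _ = N * ‖u - u'‖ ^ (r - s) := by rw [n2]
      _ ≤ 2 * N * ‖u - u'‖ ^ (r - s) := by
          have := Real.rpow_nonneg (norm_nonneg (u - u')) (r - s)
          nlinarith
    refine ⟨hfirst, ?_⟩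
    intro x hx x' hx' hdx
    set a := ‖u - u'‖ with ha
    set b := ‖x - x'‖ with hb
    have ha0 : 0 ≤ a := norm_nonneg _
    have hb0 : 0 ≤ b := norm_nonneg _
    have hrhs : 0 ≤ 2 * N * a ^ (r - s) * b ^ s :=
      mul_nonneg (mul_nonneg (by linarith) (Real.rpow_nonneg ha0 _)) (Real.rpow_nonneg hb0 _)
    rcases eq_or_lt_of_le ha0 with haz | hap
    · have huu : u = u' := norm_sub_eq_zero_iff.mp haz.symm
      subst huu
      simpa using hrhs
    rcases eq_or_lt_of_le hb0 with hbz | hbp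
    · have hxx : x = x' := norm_sub_eq_zero_iff.mp hbz.symm
      subst hxx
      simpa using hrhs
    -- both positive
    have hD1 : ‖(φ (u, x) - φ (u', x)) - (φ (u, x') - φ (u', x'))‖ ≤ 2 * N * a ^ r := by
      have h1 : ‖φ (u, x) - φ (u', x)‖ ≤ N * a ^ r := by
        have hd' : ‖((u, x) : BU × BV) - (u', x)‖ ≤ δ₁ := by rw [n2]; exact hdu
        have := hhold _ ⟨hu, hx⟩ _ ⟨hu', hx⟩ hd'
        rwa [n2] at this
      have h2 : ‖φ (u, x') - φ (u', x')‖ ≤ N * a ^ r := by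
        have hd' : ‖((u, x') : BU × BV) - (u', x')‖ ≤ δ₁ := by rw [n2]; exact hdu
        have := hhold _ ⟨hu, hx'⟩ _ ⟨hu', hx'⟩ hd'
        rwa [n2] at this
      calc _ ≤ ‖φ (u, x) - φ (u', x)‖ + ‖φ (u, x') - φ (u', x')‖ := norm_sub_le _ _
      _ ≤ 2 * N * a ^ r := by linarith
    have hD2 : ‖(φ (u, x) - φ (u', x)) - (φ (u, x') - φ (u', x'))‖ ≤ 2 * N * b ^ r := by
      have h1 : ‖φ (u, x) - φ (u, x')‖ ≤ N * b ^ r := by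
        have hd' : ‖((u, x) : BU × BV) - (u, x')‖ ≤ δ₁ := by rw [n1]; exact hdx
        have := hhold _ ⟨hu, hx⟩ _ ⟨hu, hx'⟩ hd'
        rwa [n1] at this
      have h2 : ‖φ (u', x) - φ (u', x')‖ ≤ N * b ^ r := by
        have hd' : ‖((u', x) : BU × BV) - (u', x')‖ ≤ δ₁ := by rw [n1]; exact hdx
        have := hhold _ ⟨hu', hx⟩ _ ⟨hu', hx'⟩ hd'
        rwa [n1] at this
      calc ‖(φ (u, x) - φ (u', x)) - (φ (u, x') - φ (u', x'))‖
          = ‖(φ (u, x) - φ (u, x')) - (φ (u', x) - φ (u', x'))‖ := by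
            congr 1; abel
      _ ≤ ‖φ (u, x) - φ (u, x')‖ + ‖φ (u', x) - φ (u', x')‖ := norm_sub_le _ _
      _ ≤ 2 * N * b ^ r := by linarith
    rcases le_total b a with hba | hab
    · calc ‖(φ (u, x) - φ (u', x)) - (φ (u, x') - φ (u', x'))‖ ≤ 2 * N * b ^ r := hD2
      _ = 2 * N * (b ^ (r - s) * b ^ s) := by
          rw [← Real.rpow_add hbp, sub_add_cancel]
      _ ≤ 2 * N * (a ^ (r - s) * b ^ s) := by
          apply mul_le_mul_of_nonneg_left _ (by linarith)
          exact mul_le_mul_of_nonneg_right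
            (Real.rpow_le_rpow hb0 hba (by linarith)) (Real.rpow_nonneg hb0 _)
      _ = 2 * N * a ^ (r - s) * b ^ s := by ring
    · calc ‖(φ (u, x) - φ (u', x)) - (φ (u, x') - φ (u', x'))‖ ≤ 2 * N * a ^ r := hD1
      _ = 2 * N * (a ^ (r - s) * a ^ s) := by
          rw [← Real.rpow_add hap, sub_add_cancel]
      _ ≤ 2 * N * (a ^ (r - s) * b ^ s) := by
          apply mul_le_mul_of_nonneg_left _ (by linarith)
          exact mul_le_mul_of_nonneg_left
            (Real.rpow_le_rpow ha0 hab hs) (Real.rpow_nonneg ha0 _)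
      _ = 2 * N * a ^ (r - s) * b ^ s := by ring
end

section
/- Let U, V be open convex subsets of Banach spaces, Z a Banach space, 0 ≤ s ≤ 1 < r ≤ 1 + s. If φ : U × V → Z is C^{(1, r−1)} (differentiable with (r−1)-Hölder derivative, uniformly bounded, with max norm on the product), then for each u ∈ U the map φ_u = φ(u,·) lies in the s-Hölder space C^{(0,s)}(V;Z), and u ↦ φ_u is (r−s)-Hölder from U into C^{(0,s)}(V;Z) with Hölder constant at most ‖φ‖_r. In particular, for Δ(x) := φ(u₁,x) − φ(u₀,x) one has h^s(Δ) ≤ h^{r−1}_{δ₁}(Dφ)·|u₁ − u₀|^{r−s}. -/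
open Real Metric Set

private lemma self_le_rpow' {a t : ℝ} (ha0 : 0 ≤ a) (ha1 : a ≤ 1) (ht : t ≤ 1) :
    a ≤ a ^ t := by
  rcases ha0.eq_or_lt with h | h
  · rw [← h]; exact Real.rpow_nonneg le_rfl t
  · calc a = a ^ (1:ℝ) := (Real.rpow_one a).symm
      _ ≤ a ^ t := Real.rpow_le_rpow_of_exponent_ge h ha1 ht

private lemma interp_rpow {r t a b : ℝ} (ht1 : t ≤ 1)
    (ha : 0 ≤ a) (hab : a ≤ b) : b ^ (r - 1) * a ≤ b ^ (r - t) * a ^ t := by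
  have hb0 : 0 ≤ b := ha.trans hab
  rcases ha.eq_or_lt with h | h
  · rw [← h, mul_zero]
    exact mul_nonneg (Real.rpow_nonneg hb0 _) (Real.rpow_nonneg le_rfl _)
  · have hb : 0 < b := lt_of_lt_of_le h hab
    have h1 : a ^ (1 - t) ≤ b ^ (1 - t) := Real.rpow_le_rpow ha hab (by linarith)
    have h2 : b ^ (t - 1) * a ^ (1 - t) ≤ 1 := by
      have heq : b ^ (t - 1) = (b ^ (1 - t))⁻¹ := by
        rw [← Real.rpow_neg hb.le]; ring_nf
      rw [heq, inv_mul_le_iff₀ (Real.rpow_pos_of_pos hb _)]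
      simpa using h1
    have key : b ^ (r - 1) * a = (b ^ (r - t) * a ^ t) * (b ^ (t - 1) * a ^ (1 - t)) := by
      rw [show b ^ (r - t) * a ^ t * (b ^ (t - 1) * a ^ (1 - t))
          = (b ^ (r - t) * b ^ (t - 1)) * (a ^ t * a ^ (1 - t)) by ring,
        ← Real.rpow_add hb, ← Real.rpow_add h]
      norm_num
    rw [key]
    nlinarith [mul_pos (Real.rpow_pos_of_pos hb (r - t)) (Real.rpow_pos_of_pos h t)]

private lemma comp_inr_norm_le {BU BV Z : Type*} [NormedAddCommGroup BU] [NormedSpace ℝ BU]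
    [NormedAddCommGroup BV] [NormedSpace ℝ BV]
    [NormedAddCommGroup Z] [NormedSpace ℝ Z]
    (L : (BU × BV) →L[ℝ] Z) :
    ‖L.comp (ContinuousLinearMap.inr ℝ BU BV)‖ ≤ ‖L‖ := by
  refine ContinuousLinearMap.opNorm_le_bound _ (norm_nonneg L) fun v => ?_
  have h : ‖((0 : BU), v)‖ = ‖v‖ := by simp [Prod.norm_def]
  calc ‖L (0, v)‖ ≤ ‖L‖ * ‖((0 : BU), v)‖ := L.le_opNorm _
    _ = ‖L‖ * ‖v‖ := by rw [h]

private lemma comp_inl_norm_le {BU BV Z : Type*} [NormedAddCommGroup BU] [NormedSpace ℝ BU]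
    [NormedAddCommGroup BV] [NormedSpace ℝ BV]
    [NormedAddCommGroup Z] [NormedSpace ℝ Z]
    (L : (BU × BV) →L[ℝ] Z) :
    ‖L.comp (ContinuousLinearMap.inl ℝ BU BV)‖ ≤ ‖L‖ := by
  refine ContinuousLinearMap.opNorm_le_bound _ (norm_nonneg L) fun v => ?_
  have h : ‖(v, (0 : BV))‖ = ‖v‖ := by simp [Prod.norm_def]
  calc ‖L (v, 0)‖ ≤ ‖L‖ * ‖(v, (0 : BV))‖ := L.le_opNorm _
    _ = ‖L‖ * ‖v‖ := by rw [h]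


/-- Parameter extraction, C¹⁺-case (Case 2 of Theorem `lemma:injection`):
for `0 ≤ s ≤ 1 < r ≤ 1 + s`, a `C^{(1,r-1)}` function `φ` on `U × V` (max norm on
the product, locality scale `δ₁ ∈ (0,1]`) gives partial maps `φ(u,·)` in the
s-Hölder space, and `u ↦ φ(u,·)` is (r-s)-Hölder into that space with Hölder
constant at most `‖φ‖_r`; in particular for `Δ = φ(u₁,·) - φ(u₀,·)` one has
`h^s(Δ) ≤ h^{r-1}_{δ₁}(Dφ)·|u₁-u₀|^{r-s}`. -/
theorem parameter_extraction_C1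
    {BU BV Z : Type*} [NormedAddCommGroup BU] [NormedSpace ℝ BU]
    [NormedAddCommGroup BV] [NormedSpace ℝ BV]
    [NormedAddCommGroup Z] [NormedSpace ℝ Z]
    (U : Set BU) (V : Set BV)
    (hUopen : IsOpen U) (hUconv : Convex ℝ U)
    (hVopen : IsOpen V) (hVconv : Convex ℝ V)
    (s r δ₁ M H : ℝ) (hs0 : 0 ≤ s) (hs1 : s ≤ 1) (hr1 : 1 < r) (hr2 : r ≤ 1 + s)
    (hδ0 : 0 < δ₁) (hδ1 : δ₁ ≤ 1) (hM : 0 ≤ M) (hH : 0 ≤ H)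
    (φ : BU × BV → Z) (Dφ : BU × BV → (BU × BV) →L[ℝ] Z)
    (hder : ∀ p ∈ U ×ˢ V, HasFDerivAt φ (Dφ p) p)
    (hbound : ∀ p ∈ U ×ˢ V, ‖φ p‖ ≤ M ∧ ‖Dφ p‖ ≤ M)
    (hhold : ∀ p ∈ U ×ˢ V, ∀ q ∈ U ×ˢ V, ‖p - q‖ ≤ δ₁ →
      ‖Dφ p - Dφ q‖ ≤ H * ‖p - q‖ ^ (r - 1)) :
    (∀ u ∈ U, ∀ x ∈ V, ∀ x' ∈ V, ‖x - x'‖ ≤ δ₁ →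
        ‖φ (u, x) - φ (u, x')‖ ≤ M * ‖x - x'‖ ^ s) ∧
    (∀ u₀ ∈ U, ∀ u₁ ∈ U, ‖u₁ - u₀‖ ≤ δ₁ →
      (∀ x ∈ V, ‖φ (u₁, x) - φ (u₀, x)‖ ≤ (max M H) * ‖u₁ - u₀‖ ^ (r - s)) ∧
      (∀ x ∈ V, ∀ x' ∈ V, ‖x - x'‖ ≤ δ₁ →
        ‖(φ (u₁, x) - φ (u₀, x)) - (φ (u₁, x') - φ (u₀, x'))‖ ≤
          H * ‖u₁ - u₀‖ ^ (r - s) * ‖x - x'‖ ^ s)) := by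
  -- partial derivatives
  have hderx : ∀ u ∈ U, ∀ y ∈ V, HasFDerivAt (fun y : BV => φ (u, y))
      ((Dφ (u, y)).comp (ContinuousLinearMap.inr ℝ BU BV)) y := fun u hu y hy =>
    (hder (u, y) (Set.mk_mem_prod hu hy)).comp y (hasFDerivAt_prodMk_right u y)
  have hderu : ∀ v ∈ U, ∀ y ∈ V, HasFDerivAt (fun v : BU => φ (v, y))
      ((Dφ (v, y)).comp (ContinuousLinearMap.inl ℝ BU BV)) v := fun v hv y hy =>
    (hder (v, y) (Set.mk_mem_prod hv hy)).comp v (hasFDerivAt_prodMk_left v y)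
  constructor
  · -- Part 1
    intro u hu x hx x' hx' hxx'
    have mvt : ‖φ (u, x) - φ (u, x')‖ ≤ M * ‖x - x'‖ := by
      refine hVconv.norm_image_sub_le_of_norm_hasFDerivWithin_le
        (f' := fun y => (Dφ (u, y)).comp (ContinuousLinearMap.inr ℝ BU BV))
        (fun y hy => (hderx u hu y hy).hasFDerivWithinAt)
        (fun y hy => le_trans (comp_inr_norm_le _)
          (hbound (u, y) (Set.mk_mem_prod hu hy)).2) hx' hx
    calc ‖φ (u, x) - φ (u, x')‖ ≤ M * ‖x - x'‖ := mvt
      _ ≤ M * ‖x - x'‖ ^ s := by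
        exact mul_le_mul_of_nonneg_left
          (self_le_rpow' (norm_nonneg _) (hxx'.trans hδ1) hs1) hM
  · intro u₀ hu₀ u₁ hu₁ hu
    have hrs0 : 0 ≤ r - s := by linarith
    have hrs1 : r - s ≤ 1 := by linarith
    constructor
    · -- Part 2a
      intro x hx
      have mvt : ‖φ (u₁, x) - φ (u₀, x)‖ ≤ M * ‖u₁ - u₀‖ := by
        refine hUconv.norm_image_sub_le_of_norm_hasFDerivWithin_le
          (f' := fun v => (Dφ (v, x)).comp (ContinuousLinearMap.inl ℝ BU BV))
          (fun v hv => (hderu v hv x hx).hasFDerivWithinAt)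
          (fun v hv => le_trans (comp_inl_norm_le _)
            (hbound (v, x) (Set.mk_mem_prod hv hx)).2) hu₀ hu₁
      calc ‖φ (u₁, x) - φ (u₀, x)‖ ≤ M * ‖u₁ - u₀‖ := mvt
        _ ≤ M * ‖u₁ - u₀‖ ^ (r - s) := mul_le_mul_of_nonneg_left
            (self_le_rpow' (norm_nonneg _) (hu.trans hδ1) hrs1) hM
        _ ≤ (max M H) * ‖u₁ - u₀‖ ^ (r - s) := by
            exact mul_le_mul_of_nonneg_right (le_max_left M H) (Real.rpow_nonneg (norm_nonneg _) _)
    · -- Part 2b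
      intro x hx x' hx' hxx'
      set a := ‖x - x'‖ with ha_def
      set b := ‖u₁ - u₀‖ with hb_def
      have ha0 : 0 ≤ a := norm_nonneg _
      have hb0 : 0 ≤ b := norm_nonneg _
      -- Bound A: MVT in x
      have boundA : ‖(φ (u₁, x) - φ (u₀, x)) - (φ (u₁, x') - φ (u₀, x'))‖
          ≤ (H * b ^ (r - 1)) * a := by
        refine hVconv.norm_image_sub_le_of_norm_hasFDerivWithin_le
          (f := fun y => φ (u₁, y) - φ (u₀, y))
          (f' := fun y => (Dφ (u₁, y) - Dφ (u₀, y)).comp (ContinuousLinearMap.inr ℝ BU BV))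
          (fun y hy => by
            have h := ((hderx u₁ hu₁ y hy).sub (hderx u₀ hu₀ y hy)).hasFDerivWithinAt (s := V)
            rwa [← ContinuousLinearMap.sub_comp] at h)
          (fun y hy => ?_) hx' hx
        have hnorm : ‖((u₁, y) : BU × BV) - (u₀, y)‖ = b := by
          simp [Prod.norm_def, Prod.sub_def, hb_def]
        refine le_trans (comp_inr_norm_le _) ?_
        have := hhold (u₁, y) (Set.mk_mem_prod hu₁ hy) (u₀, y) (Set.mk_mem_prod hu₀ hy)
          (by rw [hnorm]; exact hu)
        rwa [hnorm] at this
      -- Bound B: MVT in u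
      have boundB : ‖(φ (u₁, x) - φ (u₀, x)) - (φ (u₁, x') - φ (u₀, x'))‖
          ≤ (H * a ^ (r - 1)) * b := by
        have mvt : ‖(φ (u₁, x) - φ (u₁, x')) - (φ (u₀, x) - φ (u₀, x'))‖
            ≤ (H * a ^ (r - 1)) * b := by
          refine hUconv.norm_image_sub_le_of_norm_hasFDerivWithin_le
            (f := fun v => φ (v, x) - φ (v, x'))
            (f' := fun v => (Dφ (v, x) - Dφ (v, x')).comp (ContinuousLinearMap.inl ℝ BU BV))
            (fun v hv => by
              have h := ((hderu v hv x hx).sub (hderu v hv x' hx')).hasFDerivWithinAt (s := U)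
              rwa [← ContinuousLinearMap.sub_comp] at h)
            (fun v hv => ?_) hu₀ hu₁
          have hnorm : ‖((v, x) : BU × BV) - (v, x')‖ = a := by
            simp [Prod.norm_def, Prod.sub_def, ha_def]
          refine le_trans (comp_inl_norm_le _) ?_
          have := hhold (v, x) (Set.mk_mem_prod hv hx) (v, x') (Set.mk_mem_prod hv hx')
            (by rw [hnorm]; exact hxx')
          rwa [hnorm] at this
        have heq : (φ (u₁, x) - φ (u₀, x)) - (φ (u₁, x') - φ (u₀, x'))
            = (φ (u₁, x) - φ (u₁, x')) - (φ (u₀, x) - φ (u₀, x')) := by abel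
        rwa [heq]
      rcases le_total a b with hab | hab
      · calc ‖(φ (u₁, x) - φ (u₀, x)) - (φ (u₁, x') - φ (u₀, x'))‖
            ≤ (H * b ^ (r - 1)) * a := boundA
          _ = H * (b ^ (r - 1) * a) := by ring
          _ ≤ H * (b ^ (r - s) * a ^ s) :=
              mul_le_mul_of_nonneg_left (interp_rpow hs1 ha0 hab) hH
          _ = H * b ^ (r - s) * a ^ s := by ring
      · calc ‖(φ (u₁, x) - φ (u₀, x)) - (φ (u₁, x') - φ (u₀, x'))‖
            ≤ (H * a ^ (r - 1)) * b := boundB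
          _ = H * (a ^ (r - 1) * b) := by ring
          _ ≤ H * (a ^ (r - (r - s)) * b ^ (r - s)) :=
              mul_le_mul_of_nonneg_left (interp_rpow hrs1 hb0 hab) hH
          _ = H * b ^ (r - s) * a ^ s := by rw [show r - (r - s) = s by ring]; ring
end

section
/- Let E be a Banach space, C ⊆ E a regular Birkhoff cone with outer data (ℓ, K) and inner parameter ρ, and let L ∈ L(E) satisfy L(C\{0}) ⊆ C(ρ)\{0} and (1/θ) ≤ ‖L‖ ≤ θ. Define π(φ) = Lφ/⟨ℓ, Lφ⟩ for φ ∈ C with ⟨ℓ,φ⟩ = 1 and B(φ, ρ‖φ‖) ⊆ C. Then for z ∈ E with ‖z‖ < ρ/(2θ²K): ⟨ℓ, L(φ+z)⟩ ≥ ρ/(2θK) > 0, π(φ+z) is well-defined, and ‖π(φ+z) − π(φ) − Q(φ)z‖ ≤ (4θ²K⁴/ρ²)·‖z‖², where Q(φ)z = ⟨ℓ,Lφ⟩^{−1}·(Lz − ⟨ℓ,Lz⟩·π(φ)). -/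
open Real Metric Set

set_option maxHeartbeats 1000000 in
/-- Lemma `lem:Qop` (single-fiber version): quadratic expansion of the
fractional linear map `π(φ) = Lφ/⟨ℓ,Lφ⟩` around a slice point, with explicit
derivative `Q(φ)z = ⟨ℓ,Lφ⟩⁻¹(Lz - ⟨ℓ,Lz⟩π(φ))`. -/
theorem fractional_linear_quadratic_expansion
    {E : Type*} [NormedAddCommGroup E] [NormedSpace ℝ E]
    (C : Set E) (hC : IsBirkhoffCone C)
    (ℓ : E →L[ℝ] ℝ) (θ K ρ : ℝ) (hℓ : ‖ℓ‖ = 1)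
    (hθ : 1 ≤ θ) (hK : 1 ≤ K) (hρ0 : 0 < ρ) (hρ1 : ρ ≤ 1)
    (houter : ∀ u ∈ C, ‖u‖ / K ≤ ℓ u)
    (L : E →L[ℝ] E)
    (hL : ∀ x ∈ C \ {0}, L x ∈ C \ {0} ∧ Metric.ball (L x) (ρ * ‖L x‖) ⊆ C)
    (hLn : 1 / θ ≤ ‖L‖ ∧ ‖L‖ ≤ θ)
    (φ : E) (hφC : φ ∈ C) (hφℓ : ℓ φ = 1) (hφρ : Metric.ball φ (ρ * ‖φ‖) ⊆ C)
    (z : E) (hz : ‖z‖ < ρ / (2 * θ ^ 2 * K)) :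
    ρ / (2 * θ * K) ≤ ℓ (L (φ + z)) ∧
    ‖(ℓ (L (φ + z)))⁻¹ • L (φ + z) - (ℓ (L φ))⁻¹ • L φ -
        (ℓ (L φ))⁻¹ • (L z - ℓ (L z) • ((ℓ (L φ))⁻¹ • L φ))‖ ≤
      4 * θ ^ 2 * K ^ 4 / ρ ^ 2 * ‖z‖ ^ 2 := by
  obtain ⟨hL1, hL2⟩ := hLn
  have hθ0 : (0:ℝ) < θ := lt_of_lt_of_le one_pos hθ
  have hK0 : (0:ℝ) < K := lt_of_lt_of_le one_pos hK
  have hN : (0:ℝ) < ‖L‖ := lt_of_lt_of_le (by positivity) hL1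
  have hθ2 : (1:ℝ) ≤ θ ^ 2 := by nlinarith
  have hθN : 1 ≤ ‖L‖ * θ := (div_le_iff₀ hθ0).mp hL1
  have hφ1 : (1:ℝ) ≤ ‖φ‖ := by
    have h := ℓ.le_opNorm φ
    rw [hφℓ, hℓ, one_mul] at h
    simpa using h
  have hφ0 : φ ≠ 0 := by
    intro h; rw [h, norm_zero] at hφ1; linarith
  have hLC : ∀ x ∈ C, ‖L x‖ / K ≤ ℓ (L x) := by
    intro x hx
    rcases eq_or_ne x 0 with rfl | hx0
    · simp
    · exact houter _ ((hL x ⟨hx, hx0⟩).1).1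
  have hφn : (0:ℝ) < ‖φ‖ := by linarith
  have hcb : Metric.closedBall φ (ρ * ‖φ‖) ⊆ C := by
    rw [← closure_ball φ (mul_pos hρ0 hφn).ne']
    exact closure_minimal hφρ hC.isClosed
  set a := ℓ (L φ) with ha_def
  have ha_nonneg : 0 ≤ a := le_trans (by positivity) (hLC φ hφC)
  have hLbound : ‖L‖ ≤ a * K / (ρ * ‖φ‖) := by
    refine L.opNorm_le_bound
      (div_nonneg (mul_nonneg ha_nonneg hK0.le) (by positivity)) fun x => ?_
    rcases eq_or_ne x 0 with rfl | hx0
    · simp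
    · have hx : (0:ℝ) < ‖x‖ := norm_pos_iff.mpr hx0
      set t : ℝ := ρ * ‖φ‖ / ‖x‖ with ht_def
      have ht : 0 < t := by positivity
      have hmem : ∀ s : ℝ, |s| = t → φ + s • x ∈ C := by
        intro s hs
        apply hcb
        rw [Metric.mem_closedBall, dist_eq_norm, add_sub_cancel_left, norm_smul,
          Real.norm_eq_abs, hs, ht_def, div_mul_cancel₀ _ hx.ne']
      have h1 := hLC _ (hmem t (abs_of_pos ht))
      have h2 := hLC _ (hmem (-t) (by rw [abs_neg, abs_of_pos ht]))
      have hsum : ℓ (L (φ + t • x)) + ℓ (L (φ + (-t) • x)) = 2 * a := by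
        simp [map_add, map_smul, ha_def]; ring
      have hdiff : 2 * (t * ‖L x‖) ≤ ‖L (φ + t • x)‖ + ‖L (φ + (-t) • x)‖ := by
        have e : L (φ + t • x) - L (φ + (-t) • x) = (2 * t) • L x := by
          rw [map_add, map_add, map_smul, map_smul]
          module
        have h3 := norm_sub_le (L (φ + t • x)) (L (φ + (-t) • x))
        rw [e, norm_smul, Real.norm_eq_abs, abs_of_pos (by linarith)] at h3
        linarith
      have h1' : ‖L (φ + t • x)‖ ≤ ℓ (L (φ + t • x)) * K := (div_le_iff₀ hK0).mp h1
      have h2' : ‖L (φ + (-t) • x)‖ ≤ ℓ (L (φ + (-t) • x)) * K := (div_le_iff₀ hK0).mp h2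
      have hsK := congrArg (· * K) hsum
      have key : t * ‖L x‖ ≤ a * K := by nlinarith
      rw [div_mul_eq_mul_div, le_div_iff₀ (by positivity : (0:ℝ) < ρ * ‖φ‖)]
      rw [ht_def, div_mul_eq_mul_div, div_le_iff₀ hx] at key
      nlinarith [key]
  have hρN : ρ * ‖L‖ ≤ a * K := by
    have h1 : ‖L‖ * (ρ * ‖φ‖) ≤ a * K := (le_div_iff₀ (by positivity)).mp hLbound
    nlinarith [mul_le_mul_of_nonneg_left hφ1 (mul_nonneg hρ0.le hN.le)]
  have ha0 : 0 < a := by nlinarith [mul_pos hρ0 hN]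
  set b := ℓ (L z) with hb_def
  have hb : |b| ≤ ‖L‖ * ‖z‖ := by
    have h1 := ℓ.le_opNorm (L z)
    rw [hℓ, one_mul] at h1
    calc |b| = ‖ℓ (L z)‖ := (Real.norm_eq_abs _).symm
      _ ≤ ‖L z‖ := h1
      _ ≤ ‖L‖ * ‖z‖ := L.le_opNorm z
  have hzρ : ‖z‖ ≤ ρ / (2 * K) := by
    have h1 : ρ / (2 * θ ^ 2 * K) ≤ ρ / (2 * K) := by
      apply div_le_div_of_nonneg_left hρ0.le (by positivity)
      nlinarith
    linarith
  have hb2 : |b| ≤ a / 2 := by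
    have h1 : |b| ≤ ‖L‖ * (ρ / (2 * K)) := le_trans hb (mul_le_mul_of_nonneg_left hzρ hN.le)
    have h2 : ‖L‖ * (ρ / (2 * K)) ≤ a / 2 := by
      rw [mul_div_assoc', div_le_div_iff₀ (by positivity : (0:ℝ) < 2 * K) (by norm_num : (0:ℝ) < 2)]
      linarith
    linarith
  have habs := abs_le.mp hb2
  have hc0 : 0 < a + b := by linarith
  have hLφz : L (φ + z) = L φ + L z := map_add L φ z
  have hlsum : ℓ (L (φ + z)) = a + b := by rw [hLφz, map_add]
  constructor
  · rw [hlsum]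
    have h1 : ρ / (2 * θ * K) ≤ a / 2 := by
      rw [div_le_div_iff₀ (by positivity) two_pos]
      nlinarith [mul_le_mul_of_nonneg_left hθN hρ0.le,
        mul_le_mul_of_nonneg_left hρN hθ0.le]
    linarith
  · rw [hlsum, hLφz]
    have hu : ‖L φ‖ ≤ a * K := (div_le_iff₀ hK0).mp (hLC φ hφC)
    have hv : ‖L z‖ ≤ ‖L‖ * ‖z‖ := L.le_opNorm z
    have hid : (a + b)⁻¹ • (L φ + L z) - a⁻¹ • L φ - a⁻¹ • (L z - b • (a⁻¹ • L φ)) =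
        (b ^ 2 / (a ^ 2 * (a + b))) • L φ - (b / (a * (a + b))) • L z := by
      have h1 : a ≠ 0 := ha0.ne'
      have h2 : a + b ≠ 0 := hc0.ne'
      match_scalars <;> field_simp <;> try ring
    rw [hid]
    have hb_sq : b ^ 2 ≤ (‖L‖ * ‖z‖) ^ 2 := by
      have h := pow_le_pow_left₀ (abs_nonneg b) hb 2
      simpa [sq_abs] using h
    have h1sq : ρ * ‖L‖ * (ρ * ‖L‖) ≤ a * K * (a * K) :=
      mul_le_mul hρN hρN (by positivity) (by positivity)
    calc ‖(b ^ 2 / (a ^ 2 * (a + b))) • L φ - (b / (a * (a + b))) • L z‖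
        ≤ ‖(b ^ 2 / (a ^ 2 * (a + b))) • L φ‖ + ‖(b / (a * (a + b))) • L z‖ :=
          norm_sub_le _ _
      _ = b ^ 2 / (a ^ 2 * (a + b)) * ‖L φ‖ + |b| / (a * (a + b)) * ‖L z‖ := by
          rw [norm_smul, norm_smul, Real.norm_eq_abs, Real.norm_eq_abs,
            abs_of_nonneg (by positivity : (0:ℝ) ≤ b ^ 2 / (a ^ 2 * (a + b))),
            abs_div, abs_of_pos (mul_pos ha0 hc0)]
      _ ≤ b ^ 2 / (a ^ 2 * (a + b)) * (a * K) + |b| / (a * (a + b)) * (‖L‖ * ‖z‖) := by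
          gcongr
      _ = (b ^ 2 * K + |b| * (‖L‖ * ‖z‖)) / (a * (a + b)) := by
          field_simp
      _ ≤ ((‖L‖ * ‖z‖) ^ 2 * K + (‖L‖ * ‖z‖) * (‖L‖ * ‖z‖)) / (a * (a + b)) := by
          gcongr
      _ ≤ (2 * K * (‖L‖ * ‖z‖) ^ 2) / (a * (a + b)) := by
          gcongr
          nlinarith [sq_nonneg (‖L‖ * ‖z‖)]
      _ ≤ (2 * K * (‖L‖ * ‖z‖) ^ 2) / (a ^ 2 / 2) :=
          div_le_div_of_nonneg_left (by positivity) (by positivity) (by nlinarith)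
      _ = 4 * K * ‖L‖ ^ 2 * ‖z‖ ^ 2 / a ^ 2 := by
          field_simp
          ring
      _ ≤ 4 * K ^ 3 * ‖z‖ ^ 2 / ρ ^ 2 := by
          rw [div_le_div_iff₀ (by positivity) (by positivity)]
          nlinarith [mul_le_mul_of_nonneg_left h1sq
            (by positivity : (0:ℝ) ≤ 4 * K * ‖z‖ ^ 2)]
      _ ≤ 4 * θ ^ 2 * K ^ 4 / ρ ^ 2 * ‖z‖ ^ 2 := by
          rw [div_mul_eq_mul_div, div_le_div_iff₀ (by positivity) (by positivity)]
          have hθK : (1:ℝ) ≤ θ ^ 2 * K := by nlinarith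
          have hK34 : K ^ 3 ≤ θ ^ 2 * K ^ 4 := by
            nlinarith [mul_le_mul_of_nonneg_left hθK (pow_pos hK0 3).le]
          nlinarith [mul_le_mul_of_nonneg_right hK34
            (by positivity : (0:ℝ) ≤ ‖z‖ ^ 2 * ρ ^ 2)]
end

section
/- Let φ : V → Z be bounded and δ₁-locally α-Hölder on an open convex subset V of a Banach space (α ∈ (0,1]), and let ψ : U → V be K-Lipschitz on an open convex subset U of a Banach space, with K ≥ 1. Then φ ∘ ψ is bounded and δ₁-locally α-Hölder on U with h^α_{δ₁}(φ ∘ ψ) ≤ ⌈K⌉^{1−α}·K^α·h^α_{δ₁}(φ) ≤ ⌈K⌉·h^α_{δ₁}(φ). -/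
open Real Metric Set

/-- Composition of a δ₁-locally α-Hölder map with a K-Lipschitz map (K ≥ 1):
the composite is bounded and δ₁-locally α-Hölder with Hölder constant at most
`⌈K⌉^{1-α}·K^α·H ≤ ⌈K⌉·H`. -/
theorem holder_comp_lipschitz
    {X Y Z : Type*} [NormedAddCommGroup X] [NormedSpace ℝ X]
    [NormedAddCommGroup Y] [NormedSpace ℝ Y] [NormedAddCommGroup Z]
    (U : Set X) (V : Set Y) (hUopen : IsOpen U) (hUconv : Convex ℝ U)
    (hVopen : IsOpen V)
    (α δ₁ K M H : ℝ) (hα0 : 0 < α) (hα1 : α ≤ 1) (hδ : 0 < δ₁)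
    (hK : 1 ≤ K) (hH : 0 ≤ H)
    (φ : Y → Z) (ψ : X → Y)
    (hmaps : Set.MapsTo ψ U V)
    (hφb : ∀ y ∈ V, ‖φ y‖ ≤ M)
    (hφh : ∀ y ∈ V, ∀ y' ∈ V, ‖y - y'‖ ≤ δ₁ → ‖φ y - φ y'‖ ≤ H * ‖y - y'‖ ^ α)
    (hψ : ∀ x ∈ U, ∀ x' ∈ U, ‖ψ x - ψ x'‖ ≤ K * ‖x - x'‖) :
    (∀ x ∈ U, ‖φ (ψ x)‖ ≤ M) ∧
    (∀ x ∈ U, ∀ x' ∈ U, ‖x - x'‖ ≤ δ₁ →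
      ‖φ (ψ x) - φ (ψ x')‖ ≤ (⌈K⌉₊ : ℝ) ^ (1 - α) * K ^ α * H * ‖x - x'‖ ^ α) ∧
    (⌈K⌉₊ : ℝ) ^ (1 - α) * K ^ α * H ≤ (⌈K⌉₊ : ℝ) * H := by
  have hK0 : (0:ℝ) < K := lt_of_lt_of_le one_pos hK
  set n : ℕ := ⌈K⌉₊ with hn
  have hn1 : 1 ≤ n := Nat.one_le_ceil_iff.mpr hK0
  have hnpos : (0:ℝ) < (n:ℝ) := by exact_mod_cast Nat.pos_of_ne_zero (by omega)
  have hKn : K ≤ (n:ℝ) := Nat.le_ceil K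
  refine ⟨fun x hx => hφb _ (hmaps hx), ?_, ?_⟩
  · intro x hx x' hx' hd
    set d := ‖x - x'‖ with hdd
    have hd0 : 0 ≤ d := norm_nonneg _
    -- points on the segment
    set p : ℕ → X := fun i => x + ((i:ℝ)/(n:ℝ)) • (x' - x) with hp
    have hpmem : ∀ i ≤ n, p i ∈ U := by
      intro i hi
      exact hUconv.add_smul_sub_mem hx hx'
        ⟨div_nonneg (Nat.cast_nonneg i) hnpos.le,
         (div_le_one hnpos).mpr (by exact_mod_cast hi)⟩
    have hstep : ∀ i, p (i+1) - p i = ((1:ℝ)/(n:ℝ)) • (x' - x) := by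
      intro i
      simp only [hp]
      rw [add_sub_add_left_eq_sub, ← sub_smul]
      congr 1
      push_cast
      field_simp
      ring
    have hstepnorm : ∀ i, ‖p i - p (i+1)‖ = d / n := by
      intro i
      rw [norm_sub_rev, hstep, norm_smul]
      simp [hdd, norm_sub_rev x x', abs_of_pos (by positivity : (0:ℝ) < 1/(n:ℝ))]
      ring
    have hψstep : ∀ i < n, ‖ψ (p i) - ψ (p (i+1))‖ ≤ K * d / n := by
      intro i hi
      have := hψ (p i) (hpmem i hi.le) (p (i+1)) (hpmem (i+1) hi)
      rw [hstepnorm i] at this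
      calc ‖ψ (p i) - ψ (p (i+1))‖ ≤ K * (d / n) := this
        _ = K * d / n := by ring
    have hle1 : K * d / n ≤ δ₁ := by
      have h1 : K * d ≤ n * δ₁ := by
        calc K * d ≤ (n:ℝ) * d := by nlinarith
          _ ≤ (n:ℝ) * δ₁ := by nlinarith
      rw [div_le_iff₀ hnpos]; linarith [h1]
    have hpiece : ∀ i < n, ‖φ (ψ (p i)) - φ (ψ (p (i+1)))‖ ≤ H * (K * d / n) ^ α := by
      intro i hi
      have h1 := hφh _ (hmaps (hpmem i hi.le)) _ (hmaps (hpmem (i+1) hi))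
        (le_trans (hψstep i hi) hle1)
      refine h1.trans (mul_le_mul_of_nonneg_left ?_ hH)
      exact Real.rpow_le_rpow (norm_nonneg _) (hψstep i hi) hα0.le
    -- telescoping
    have hp0 : p 0 = x := by simp [hp]
    have hpn : p n = x' := by
      simp only [hp]
      rw [div_self hnpos.ne', one_smul]
      abel
    have htel : φ (ψ x) - φ (ψ x') =
        ∑ i ∈ Finset.range n, (φ (ψ (p i)) - φ (ψ (p (i+1)))) := by
      rw [Finset.sum_range_sub' (fun i => φ (ψ (p i)))]
      rw [hp0, hpn]
    have hsum : ‖φ (ψ x) - φ (ψ x')‖ ≤ (n:ℝ) * (H * (K * d / n) ^ α) := by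
      rw [htel]
      calc ‖∑ i ∈ Finset.range n, (φ (ψ (p i)) - φ (ψ (p (i+1))))‖
          ≤ ∑ i ∈ Finset.range n, ‖φ (ψ (p i)) - φ (ψ (p (i+1)))‖ :=
            norm_sum_le _ _
        _ ≤ ∑ i ∈ Finset.range n, (H * (K * d / n) ^ α) :=
            Finset.sum_le_sum (fun i hi => hpiece i (Finset.mem_range.mp hi))
        _ = (n:ℝ) * (H * (K * d / n) ^ α) := by
            rw [Finset.sum_const, Finset.card_range, nsmul_eq_mul]
    refine hsum.trans (le_of_eq ?_)
    rw [Real.div_rpow (by positivity) hnpos.le, Real.mul_rpow hK0.le hd0,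
        Real.rpow_sub hnpos, Real.rpow_one]
    field_simp
  · have h1 : K ^ α ≤ (n:ℝ) ^ α := Real.rpow_le_rpow hK0.le hKn hα0.le
    have h2 : (n:ℝ) ^ (1-α) * (n:ℝ) ^ α = (n:ℝ) := by
      rw [← Real.rpow_add hnpos]; simp
    calc (n:ℝ) ^ (1-α) * K ^ α * H ≤ (n:ℝ) ^ (1-α) * (n:ℝ) ^ α * H := by
          exact mul_le_mul_of_nonneg_right
            (mul_le_mul_of_nonneg_left h1 (by positivity)) hH
      _ = (n:ℝ) * H := by rw [h2]
end

section
/- Let X be a Banach space, U an open convex subset of a Banach space B, and suppose f : U → X satisfies the fixed point equation f(u) = π_u(f(u)) where: (i) for each u, z ↦ π_u(φ + z) is Fréchet differentiable at z = 0 with derivative Q_u satisfying ‖π_u(φ+z) − π_u(φ) − Q_u z‖ ≤ C‖z‖² for ‖z‖ small; (ii) 1 − Q_u is invertible with uniformly bounded inverse; (iii) u ↦ π_u(φ) is differentiable with derivative P_u(φ) and error O(|h|^{1+α}) for some α > 0; (iv) f is Lipschitz and u ↦ Q_u is α-Hölder (in the sense that ‖(Q_{u+h} − Q_u)z‖ =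 O(|h|^α‖z‖) along the relevant increments). Then f is differentiable with D_u f(u) = (1 − Q_u)^{−1} P_u(f(u)). -/
open Metric Set

/-- Abstract bootstrap differentiability of a parametrized fixed point
(Theorem `sedro thm`): under quadratic expansion of `π_u` at the fixed point
with derivative `Q_u`, invertibility of `1 - Q_u` with uniformly bounded
inverse, differentiability in the parameter with Hölder error, Lipschitz
continuity of the fixed point and α-Hölder continuity of `u ↦ Q_u`, the fixed
point map `f` is differentiable with `D_u f(u) = (1 - Q_u)⁻¹ P_u(f(u))`. -/
theorem fixed_point_differentiable
    {B X : Type*} [NormedAddCommGroup B] [NormedSpace ℝ B]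
    [NormedAddCommGroup X] [NormedSpace ℝ X] [CompleteSpace X]
    (U : Set B) (hUopen : IsOpen U) (hUconv : Convex ℝ U)
    (pr : B → X → X) (f : B → X) (Q : B → X →L[ℝ] X) (P : B → B →L[ℝ] X)
    (α : ℝ) (hα : 0 < α)
    (hfix : ∀ u ∈ U, pr u (f u) = f u)
    (hQ : ∃ C ε : ℝ, 0 < ε ∧ ∀ u ∈ U, ∀ z : X, ‖z‖ ≤ ε →
      ‖pr u (f u + z) - pr u (f u) - Q u z‖ ≤ C * ‖z‖ ^ 2)
    (hinv : ∃ Cinv : ℝ, ∀ u ∈ U, ∃ R : X →L[ℝ] X,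
      (1 - Q u) * R = 1 ∧ R * (1 - Q u) = 1 ∧ ‖R‖ ≤ Cinv)
    (hP : ∃ C : ℝ, ∀ u ∈ U, ∀ h : B, u + h ∈ U →
      ‖pr (u + h) (f u) - pr u (f u) - P u h‖ ≤ C * ‖h‖ ^ (1 + α))
    (hLip : ∃ C : ℝ, ∀ u ∈ U, ∀ v ∈ U, ‖f u - f v‖ ≤ C * ‖u - v‖)
    (hQHol : ∃ C : ℝ, ∀ u ∈ U, ∀ h : B, u + h ∈ U →
      ‖Q (u + h) - Q u‖ ≤ C * ‖h‖ ^ α) :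
    ∀ u ∈ U, ∀ R : X →L[ℝ] X,
      (1 - Q u) * R = 1 → R * (1 - Q u) = 1 →
      HasFDerivAt f (R.comp (P u)) u := by
  obtain ⟨C₁, ε, hε, hQ⟩ := hQ
  obtain ⟨C₂, hP⟩ := hP
  obtain ⟨C₃, hLip⟩ := hLip
  obtain ⟨C₄, hQHol⟩ := hQHol
  intro u hu R hR1 hR2
  set β : ℝ := min α 1 with hβdef
  have hβ : 0 < β := lt_min hα one_pos
  have hβ1 : β ≤ 1 := min_le_right _ _
  have hβα : β ≤ α := min_le_left _ _
  set A₁ := max C₁ 0 with hA₁def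
  set A₂ := max C₂ 0 with hA₂def
  set A₃ := max C₃ 0 with hA₃def
  set A₄ := max C₄ 0 with hA₄def
  have hA₁ : (0:ℝ) ≤ A₁ := le_max_right _ _
  have hA₂ : (0:ℝ) ≤ A₂ := le_max_right _ _
  have hA₃ : (0:ℝ) ≤ A₃ := le_max_right _ _
  have hA₄ : (0:ℝ) ≤ A₄ := le_max_right _ _
  set K := ‖R‖ * (A₁ * (A₃ * A₃) + A₂ + A₄ * A₃) with hK
  have hK0 : 0 ≤ K := by rw [hK]; positivity
  rw [hasFDerivAt_iff_isLittleO_nhds_zero]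
  have key : ∀ᶠ h : B in nhds 0,
      ‖f (u + h) - f u - (R.comp (P u)) h‖ ≤ K * (‖h‖ * ‖h‖ ^ β) := by
    have tend : Filter.Tendsto (fun h : B => u + h) (nhds 0) (nhds u) := by
      have hcu : Continuous fun h : B => u + h := continuous_const.add continuous_id
      simpa using hcu.tendsto (0 : B)
    have hmemU : ∀ᶠ h : B in nhds 0, u + h ∈ U :=
      tend.eventually (hUopen.eventually_mem hu)
    set δ := min 1 (ε / (A₃ + 1)) with hδdef
    have hδ : 0 < δ := lt_min one_pos (div_pos hε (by positivity))
    have hsmall : ∀ᶠ h : B in nhds 0, ‖h‖ ≤ δ := by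
      filter_upwards [Metric.closedBall_mem_nhds (0 : B) hδ] with h hh
      simpa [Metric.mem_closedBall, dist_zero_right] using hh
    filter_upwards [hmemU, hsmall] with h hhU hhδ
    rcases eq_or_ne h 0 with rfl | hne
    · simp [Real.zero_rpow hβ.ne']
    · have hpos : 0 < ‖h‖ := norm_pos_iff.mpr hne
      have hh1 : ‖h‖ ≤ 1 := hhδ.trans (min_le_left _ _)
      set Δ := f (u + h) - f u with hΔdef
      have hΔle : ‖Δ‖ ≤ A₃ * ‖h‖ := by
        have h1 := hLip (u + h) hhU u hu
        rw [add_sub_cancel_left] at h1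
        exact h1.trans (mul_le_mul_of_nonneg_right (le_max_left _ _) (norm_nonneg _))
      have hΔε : ‖Δ‖ ≤ ε := by
        have h2 : ‖h‖ ≤ ε / (A₃ + 1) := hhδ.trans (min_le_right _ _)
        have h3 : A₃ * ‖h‖ ≤ A₃ * (ε / (A₃ + 1)) := mul_le_mul_of_nonneg_left h2 hA₃
        have hc : (0:ℝ) < A₃ + 1 := by positivity
        have h4 : A₃ * (ε / (A₃ + 1)) ≤ ε := by
          rw [mul_div_assoc', div_le_iff₀ hc]; nlinarith
        exact hΔle.trans (h3.trans h4)
      have hfix' : pr (u + h) (f (u + h)) = f (u + h) := hfix _ hhU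
      have hfu : f (u + h) + -Δ = f u := by rw [hΔdef]; abel
      have hz : ‖-Δ‖ ≤ ε := by rwa [norm_neg]
      have e1 : ‖pr (u + h) (f u) - f (u + h) + Q (u + h) Δ‖ ≤ A₁ * ‖Δ‖ ^ 2 := by
        have e0 := hQ (u + h) hhU (-Δ) hz
        rw [hfu, hfix'] at e0
        calc ‖pr (u + h) (f u) - f (u + h) + Q (u + h) Δ‖
            = ‖pr (u + h) (f u) - f (u + h) - Q (u + h) (-Δ)‖ := by
              rw [map_neg, sub_neg_eq_add]
          _ ≤ C₁ * ‖-Δ‖ ^ 2 := e0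
          _ ≤ A₁ * ‖Δ‖ ^ 2 := by
              rw [norm_neg]
              exact mul_le_mul_of_nonneg_right (le_max_left _ _) (by positivity)
      have e2 : ‖pr (u + h) (f u) - f u - P u h‖ ≤ A₂ * ‖h‖ ^ (1 + α) := by
        have e0 := hP u hu h hhU
        rw [hfix u hu] at e0
        exact e0.trans (mul_le_mul_of_nonneg_right (le_max_left _ _)
          (Real.rpow_nonneg (norm_nonneg _) _))
      have e3 : ‖Q (u + h) Δ - Q u Δ‖ ≤ A₄ * ‖h‖ ^ α * ‖Δ‖ := by
        have h1 : ‖(Q (u + h) - Q u) Δ‖ ≤ ‖Q (u + h) - Q u‖ * ‖Δ‖ :=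
          (Q (u + h) - Q u).le_opNorm Δ
        rw [ContinuousLinearMap.sub_apply] at h1
        refine h1.trans ?_
        have h2 : ‖Q (u + h) - Q u‖ ≤ A₄ * ‖h‖ ^ α :=
          (hQHol u hu h hhU).trans (mul_le_mul_of_nonneg_right (le_max_left _ _)
            (Real.rpow_nonneg (norm_nonneg _) _))
        exact mul_le_mul_of_nonneg_right h2 (norm_nonneg _)
      have hRinv : ∀ z : X, R ((1 - Q u) z) = z := fun z => by
        have := congrArg (fun T : X →L[ℝ] X => T z) hR2
        simpa using this
      have alg : Δ - R (P u h) =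
          R (-(pr (u + h) (f u) - f (u + h) + Q (u + h) Δ) +
             (pr (u + h) (f u) - f u - P u h) +
             (Q (u + h) Δ - Q u Δ)) := by
        have hvec : -(pr (u + h) (f u) - f (u + h) + Q (u + h) Δ) +
             (pr (u + h) (f u) - f u - P u h) +
             (Q (u + h) Δ - Q u Δ) = (1 - Q u) Δ - P u h := by
          simp only [ContinuousLinearMap.sub_apply, ContinuousLinearMap.one_apply, hΔdef]
          abel
        rw [hvec, map_sub, hRinv]
      have hnorm : ‖Δ - R (P u h)‖ ≤
          ‖R‖ * (A₁ * ‖Δ‖ ^ 2 + A₂ * ‖h‖ ^ (1 + α) + A₄ * ‖h‖ ^ α * ‖Δ‖) := by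
        rw [alg]
        refine (R.le_opNorm _).trans ?_
        refine mul_le_mul_of_nonneg_left ?_ (norm_nonneg R)
        refine (norm_add₃_le).trans ?_
        rw [norm_neg]
        exact add_le_add (add_le_add e1 e2) e3
      have h5 : ‖h‖ ≤ ‖h‖ ^ β := by
        calc ‖h‖ = ‖h‖ ^ (1:ℝ) := (Real.rpow_one _).symm
          _ ≤ ‖h‖ ^ β := Real.rpow_le_rpow_of_exponent_ge hpos hh1 hβ1
      have h6 : ‖h‖ ^ α ≤ ‖h‖ ^ β := Real.rpow_le_rpow_of_exponent_ge hpos hh1 hβα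
      have pw1 : ‖Δ‖ ^ 2 ≤ A₃ * A₃ * (‖h‖ * ‖h‖ ^ β) := by
        calc ‖Δ‖ ^ 2 = ‖Δ‖ * ‖Δ‖ := sq ‖Δ‖
          _ ≤ (A₃ * ‖h‖) * (A₃ * ‖h‖) :=
            mul_le_mul hΔle hΔle (norm_nonneg _) (by positivity)
          _ = A₃ * A₃ * (‖h‖ * ‖h‖) := by ring
          _ ≤ A₃ * A₃ * (‖h‖ * ‖h‖ ^ β) := by
            apply mul_le_mul_of_nonneg_left _ (by positivity : (0:ℝ) ≤ A₃ * A₃)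
            exact mul_le_mul_of_nonneg_left h5 (norm_nonneg _)
      have pw2 : ‖h‖ ^ (1 + α) ≤ ‖h‖ * ‖h‖ ^ β := by
        rw [Real.rpow_add hpos, Real.rpow_one]
        exact mul_le_mul_of_nonneg_left h6 (norm_nonneg _)
      have pw3 : ‖h‖ ^ α * ‖Δ‖ ≤ A₃ * (‖h‖ * ‖h‖ ^ β) := by
        calc ‖h‖ ^ α * ‖Δ‖ ≤ ‖h‖ ^ β * (A₃ * ‖h‖) :=
              mul_le_mul h6 hΔle (norm_nonneg _) (Real.rpow_nonneg (norm_nonneg _) _)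
          _ = A₃ * (‖h‖ * ‖h‖ ^ β) := by ring
      calc ‖f (u + h) - f u - (R.comp (P u)) h‖ = ‖Δ - R (P u h)‖ := by
            rw [hΔdef, ContinuousLinearMap.comp_apply]
        _ ≤ ‖R‖ * (A₁ * ‖Δ‖ ^ 2 + A₂ * ‖h‖ ^ (1 + α) + A₄ * ‖h‖ ^ α * ‖Δ‖) := hnorm
        _ ≤ ‖R‖ * ((A₁ * (A₃ * A₃) + A₂ + A₄ * A₃) * (‖h‖ * ‖h‖ ^ β)) := by
            refine mul_le_mul_of_nonneg_left ?_ (norm_nonneg R)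
            have t1 : A₁ * ‖Δ‖ ^ 2 ≤ A₁ * (A₃ * A₃) * (‖h‖ * ‖h‖ ^ β) := by
              calc A₁ * ‖Δ‖ ^ 2 ≤ A₁ * (A₃ * A₃ * (‖h‖ * ‖h‖ ^ β)) :=
                    mul_le_mul_of_nonneg_left pw1 hA₁
                _ = A₁ * (A₃ * A₃) * (‖h‖ * ‖h‖ ^ β) := by ring
            have t2 : A₂ * ‖h‖ ^ (1 + α) ≤ A₂ * (‖h‖ * ‖h‖ ^ β) :=
              mul_le_mul_of_nonneg_left pw2 hA₂
            have t3 : A₄ * ‖h‖ ^ α * ‖Δ‖ ≤ A₄ * A₃ * (‖h‖ * ‖h‖ ^ β) := by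
              calc A₄ * ‖h‖ ^ α * ‖Δ‖ = A₄ * (‖h‖ ^ α * ‖Δ‖) := by ring
                _ ≤ A₄ * (A₃ * (‖h‖ * ‖h‖ ^ β)) := mul_le_mul_of_nonneg_left pw3 hA₄
                _ = A₄ * A₃ * (‖h‖ * ‖h‖ ^ β) := by ring
            calc A₁ * ‖Δ‖ ^ 2 + A₂ * ‖h‖ ^ (1 + α) + A₄ * ‖h‖ ^ α * ‖Δ‖
                ≤ A₁ * (A₃ * A₃) * (‖h‖ * ‖h‖ ^ β) + A₂ * (‖h‖ * ‖h‖ ^ β) +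
                  A₄ * A₃ * (‖h‖ * ‖h‖ ^ β) := add_le_add (add_le_add t1 t2) t3
              _ = (A₁ * (A₃ * A₃) + A₂ + A₄ * A₃) * (‖h‖ * ‖h‖ ^ β) := by ring
        _ = K * (‖h‖ * ‖h‖ ^ β) := by rw [hK]; ring
  have big : (fun h => f (u + h) - f u - (R.comp (P u)) h) =O[nhds 0]
      fun h : B => ‖h‖ * ‖h‖ ^ β := by
    rw [Asymptotics.isBigO_iff]
    refine ⟨K, ?_⟩
    filter_upwards [key] with h hh
    rwa [Real.norm_of_nonneg (by positivity)]
  have small : (fun h : B => ‖h‖ * ‖h‖ ^ β) =o[nhds 0] fun h : B => h := by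
    rw [Asymptotics.isLittleO_iff]
    intro c hc
    have tends : Filter.Tendsto (fun h : B => ‖h‖ ^ β) (nhds 0) (nhds 0) := by
      have hct : ContinuousAt (fun x : ℝ => x ^ β) 0 :=
        Real.continuousAt_rpow_const 0 β (Or.inr hβ.le)
      have := hct.tendsto.comp (tendsto_norm_zero (E := B))
      simpa [Real.zero_rpow hβ.ne', Function.comp_def] using this
    filter_upwards [tends.eventually (eventually_le_nhds hc)] with h hh
    rw [Real.norm_of_nonneg (by positivity)]
    calc ‖h‖ * ‖h‖ ^ β ≤ ‖h‖ * c := mul_le_mul_of_nonneg_left hh (norm_nonneg _)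
      _ = c * ‖h‖ := mul_comm _ _
  exact big.trans_isLittleO small
end
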